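/- In Euclidean ℝⁿ, for constants 0 < c₁ < c₂ and any ε > 0 there exists c = c(c₁,c₂,ε) such that for all q, p ∈ ℝⁿ and all 0 < ν < τ, ∫_{|q-z|<ε} Q(c₁(τ-ν),q,z)·Q(c₂ν,z,p) dz ≤ c·Q(c₂τ,q,p), where Q(α,x,y) = (4πα)^{-n/2} exp(-|x-y|²/(4α)). -/

import Mathlib

open Real MeasureTheory GaussianFourier

private lemma gauss_square_id {F : Type*} [NormedAddCommGroup F] [InnerProductSpace ℝ F]
    (a b : ℝ) (ha : 0 < a) (hb : 0 < b) (u v : F) :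
    ‖u‖^2/(4*a) + ‖v‖^2/(4*b)
      = ‖u+v‖^2/(4*(a+b)) + ‖b•u - a•v‖^2/(4*a*b*(a+b)) := by
  have h1 : ‖u+v‖^2 = ‖u‖^2 + 2*(inner ℝ u v : ℝ) + ‖v‖^2 := norm_add_sq_real u v
  have h2 : ‖b•u - a•v‖^2 = b^2*‖u‖^2 - 2*(a*b)*(inner ℝ u v : ℝ) + a^2*‖v‖^2 := by
    rw [norm_sub_sq_real, real_inner_smul_left, real_inner_smul_right,
      norm_smul, norm_smul]
    simp [abs_of_pos ha, abs_of_pos hb, mul_pow]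
    ring
  rw [h1, h2]
  field_simp
  ring

private lemma gauss_integrable {n : ℕ} {b : ℝ} (hb : 0 < b) :
    Integrable (fun v : EuclideanSpace ℝ (Fin n) => rexp (-b * ‖v‖^2)) := by
  have h := (integrable_cexp_neg_mul_sq_norm_add (V := EuclideanSpace ℝ (Fin n))
    (b := (b:ℂ)) (by simpa using hb) 0 0).re
  refine h.congr (Filter.Eventually.of_forall fun v => ?_)
  have h2 : -(b:ℂ) * (‖v‖:ℂ)^2 + 0 * ((inner ℝ (0 : EuclideanSpace ℝ (Fin n)) v : ℝ) : ℂ)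
      = ((-b * ‖v‖^2 : ℝ) : ℂ) := by push_cast; ring
  simp only [h2]
  simp only [RCLike.re_to_complex]
  exact Complex.exp_ofReal_re _

/-- Lemma A in Euclidean space: the Gaussian convolution inequality for heat kernels
with constants `c₁ < c₂`. -/
theorem gaussian_convolution_bound (n : ℕ) (c₁ c₂ ε : ℝ)
    (hc₁ : 0 < c₁) (hc : c₁ < c₂) (hε : 0 < ε) :
    ∃ c : ℝ, ∀ (q p : EuclideanSpace ℝ (Fin n)) (ν τ : ℝ), 0 < ν → ν < τ →
      (∫ z in Metric.ball q ε,
          ((4 * π * (c₁ * (τ - ν))) ^ (-(n : ℝ) / 2) *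
              Real.exp (-(dist q z) ^ 2 / (4 * (c₁ * (τ - ν))))) *
            ((4 * π * (c₂ * ν)) ^ (-(n : ℝ) / 2) *
              Real.exp (-(dist z p) ^ 2 / (4 * (c₂ * ν))))) ≤
        c * ((4 * π * (c₂ * τ)) ^ (-(n : ℝ) / 2) *
              Real.exp (-(dist q p) ^ 2 / (4 * (c₂ * τ)))) := by
  set t : ℝ := (n : ℝ) / 2 with ht
  have ht0 : 0 ≤ t := by positivity
  refine ⟨(c₂/c₁) ^ t, fun q p ν τ hν hντ => ?_⟩
  set a := c₁ * (τ - ν) with ha_def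
  set b := c₂ * ν with hb_def
  have hπ := Real.pi_pos
  have ha : 0 < a := mul_pos hc₁ (by linarith)
  have hb : 0 < b := mul_pos (hc₁.trans hc) hν
  have hτ : 0 < τ := hν.trans hντ
  have hs : 0 < c₂ * τ := mul_pos (hc₁.trans hc) hτ
  have hab : 0 < a + b := by linarith
  have habs : a + b ≤ c₂ * τ := by nlinarith
  have hlow : c₁ * τ ≤ a + b := by nlinarith
  have hAτ : (0:ℝ) < 4 * π * (c₁ * τ) := mul_pos (by positivity) (mul_pos hc₁ hτ)
  have hBτ : (0:ℝ) < 4 * π * (c₂ * τ) := mul_pos (by positivity) hs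
  set r : ℝ := (a + b) / (4 * a * b) with hr_def
  have hr : 0 < r := by positivity
  set m : EuclideanSpace ℝ (Fin n) := (a + b)⁻¹ • (b • q + a • p) with hm_def
  set E : ℝ := rexp (-(dist q p) ^ 2 / (4 * (c₂ * τ))) with hE_def
  have hE : 0 < E := Real.exp_pos _
  set K : ℝ := (4 * π * a) ^ (-t) * (4 * π * b) ^ (-t) * E with hK_def
  have hK : 0 < K := by
    have h1 := Real.rpow_pos_of_pos (show (0:ℝ) < 4*π*a by positivity) (-t)
    have h2 := Real.rpow_pos_of_pos (show (0:ℝ) < 4*π*b by positivity) (-t)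
    positivity
  have hmeq : (a + b) • m = b • q + a • p := by
    rw [hm_def, smul_smul, mul_inv_cancel₀ (ne_of_gt hab), one_smul]
  -- pointwise bound
  have key : ∀ z : EuclideanSpace ℝ (Fin n),
      ((4 * π * a) ^ (-t) * rexp (-(dist q z) ^ 2 / (4 * a))) *
        ((4 * π * b) ^ (-t) * rexp (-(dist z p) ^ 2 / (4 * b)))
      ≤ K * rexp (-r * ‖z - m‖ ^ 2) := by
    intro z
    have hsub : b • (q - z) - a • (z - p) = (a + b) • (m - z) := by
      rw [smul_sub (a + b) m z, hmeq]; module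
    have hid := gauss_square_id a b ha hb (q - z) (z - p)
    rw [show (q - z) + (z - p) = q - p by abel, hsub] at hid
    have hnorm : ‖(a + b) • (m - z)‖ ^ 2 = (a + b)^2 * ‖z - m‖^2 := by
      rw [norm_smul, Real.norm_eq_abs, abs_of_pos hab, mul_pow, norm_sub_rev]
    rw [hnorm] at hid
    have h2 : (a + b)^2 * ‖z - m‖^2 / (4 * a * b * (a + b)) = r * ‖z - m‖^2 := by
      rw [hr_def]; field_simp
    rw [h2] at hid
    have harg : -(dist q z) ^ 2 / (4 * a) + -(dist z p) ^ 2 / (4 * b)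
        ≤ -(dist q p) ^ 2 / (4 * (c₂ * τ)) + -r * ‖z - m‖ ^ 2 := by
      rw [dist_eq_norm, dist_eq_norm, dist_eq_norm]
      have h1 : ‖q - p‖^2 / (4 * (c₂ * τ)) ≤ ‖q - p‖^2 / (4 * (a + b)) :=
        div_le_div_of_nonneg_left (by positivity) (by positivity) (by linarith)
      have e1 : -‖q - z‖ ^ 2 / (4 * a) = -(‖q - z‖^2 / (4*a)) := by ring
      have e2 : -‖z - p‖ ^ 2 / (4 * b) = -(‖z - p‖^2 / (4*b)) := by ring
      have e3 : -‖q - p‖ ^ 2 / (4 * (c₂ * τ)) = -(‖q - p‖^2 / (4*(c₂*τ))) := by ring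
      rw [e1, e2, e3]
      have e4 : -r * ‖z - m‖ ^ 2 = -(r * ‖z - m‖ ^ 2) := by ring
      rw [e4]
      linarith [hid, h1]
    calc ((4 * π * a) ^ (-t) * rexp (-(dist q z) ^ 2 / (4 * a))) *
          ((4 * π * b) ^ (-t) * rexp (-(dist z p) ^ 2 / (4 * b)))
        = ((4 * π * a) ^ (-t) * (4 * π * b) ^ (-t)) *
            rexp (-(dist q z) ^ 2 / (4 * a) + -(dist z p) ^ 2 / (4 * b)) := by
          rw [Real.exp_add]; ring
      _ ≤ ((4 * π * a) ^ (-t) * (4 * π * b) ^ (-t)) *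
            rexp (-(dist q p) ^ 2 / (4 * (c₂ * τ)) + -r * ‖z - m‖ ^ 2) := by
          apply mul_le_mul_of_nonneg_left (Real.exp_le_exp.2 harg)
          positivity
      _ = K * rexp (-r * ‖z - m‖ ^ 2) := by rw [Real.exp_add, hK_def, hE_def]; ring
  -- dominating function
  have hg_int : Integrable (fun z : EuclideanSpace ℝ (Fin n) => K * rexp (-r * ‖z - m‖ ^ 2)) :=
    ((gauss_integrable hr).comp_sub_right m).const_mul K
  have hf_cont : Continuous (fun z : EuclideanSpace ℝ (Fin n) =>
      ((4 * π * a) ^ (-t) * rexp (-(dist q z) ^ 2 / (4 * a))) *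
        ((4 * π * b) ^ (-t) * rexp (-(dist z p) ^ 2 / (4 * b)))) := by
    fun_prop
  have hf_nonneg : ∀ z : EuclideanSpace ℝ (Fin n), 0 ≤
      ((4 * π * a) ^ (-t) * rexp (-(dist q z) ^ 2 / (4 * a))) *
        ((4 * π * b) ^ (-t) * rexp (-(dist z p) ^ 2 / (4 * b))) := by
    intro z
    have h1 := Real.rpow_nonneg (show (0:ℝ) ≤ 4*π*a by positivity) (-t)
    have h2 := Real.rpow_nonneg (show (0:ℝ) ≤ 4*π*b by positivity) (-t)
    positivity
  have hf_int : Integrable (fun z : EuclideanSpace ℝ (Fin n) =>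
      ((4 * π * a) ^ (-t) * rexp (-(dist q z) ^ 2 / (4 * a))) *
        ((4 * π * b) ^ (-t) * rexp (-(dist z p) ^ 2 / (4 * b)))) := by
    refine hg_int.mono hf_cont.aestronglyMeasurable
      (Filter.Eventually.of_forall fun z => ?_)
    rw [Real.norm_eq_abs, Real.norm_eq_abs, abs_of_nonneg (hf_nonneg z),
      abs_of_nonneg (le_trans (hf_nonneg z) (key z))]
    exact key z
  -- chain
  have s1a : (∫ z in Metric.ball q ε,
      ((4 * π * a) ^ (-t) * rexp (-(dist q z) ^ 2 / (4 * a))) *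
        ((4 * π * b) ^ (-t) * rexp (-(dist z p) ^ 2 / (4 * b))))
      ≤ ∫ z in Metric.ball q ε, K * rexp (-r * ‖z - m‖ ^ 2) :=
    setIntegral_mono_on hf_int.integrableOn hg_int.integrableOn
      measurableSet_ball (fun z _ => key z)
  have s1b : (∫ z in Metric.ball q ε, K * rexp (-r * ‖z - m‖ ^ 2))
      ≤ ∫ z : EuclideanSpace ℝ (Fin n), K * rexp (-r * ‖z - m‖ ^ 2) :=
    setIntegral_le_integral hg_int (Filter.Eventually.of_forall fun z => by positivity)
  have step2 : (∫ z : EuclideanSpace ℝ (Fin n), K * rexp (-r * ‖z - m‖ ^ 2)) = K * (π / r) ^ t := by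
    rw [integral_const_mul]
    congr 1
    rw [integral_sub_right_eq_self (μ := volume) (fun w : EuclideanSpace ℝ (Fin n) => rexp (-r * ‖w‖ ^ 2)) m,
      integral_rexp_neg_mul_sq_norm hr]
    simp [finrank_euclideanSpace_fin, ht]
  -- constants
  have const_id : K * (π / r) ^ t ≤ (c₂/c₁) ^ t * ((4 * π * (c₂ * τ)) ^ (-t) * E) := by
    have hxy : (4 * π * a) ^ t * (4 * π * b) ^ t
        = (4 * π * (a + b)) ^ t * (π / r) ^ t := by
      rw [← Real.mul_rpow (by positivity) (by positivity),
        ← Real.mul_rpow (by positivity) (by positivity)]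
      congr 1
      rw [hr_def]; field_simp
    have h1 : (4 * π * a) ^ (-t) * (4 * π * b) ^ (-t) * (π / r) ^ t
        = (4 * π * (a + b)) ^ (-t) := by
      rw [Real.rpow_neg (by positivity), Real.rpow_neg (by positivity),
        Real.rpow_neg (by positivity)]
      have p1 : (0:ℝ) < (4 * π * a) ^ t := Real.rpow_pos_of_pos (by positivity) t
      have p2 : (0:ℝ) < (4 * π * b) ^ t := Real.rpow_pos_of_pos (by positivity) t
      have p3 : (0:ℝ) < (4 * π * (a + b)) ^ t := Real.rpow_pos_of_pos (by positivity) t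
      field_simp
      linarith [hxy]
    have h2 : (4 * π * (a + b)) ^ (-t) ≤ (4 * π * (c₁ * τ)) ^ (-t) :=
      Real.rpow_le_rpow_of_nonpos hAτ (mul_le_mul_of_nonneg_left hlow (by positivity)) (by linarith)
    have h3 : (4 * π * (c₁ * τ)) ^ (-t) = (c₂/c₁) ^ t * (4 * π * (c₂ * τ)) ^ (-t) := by
      rw [Real.rpow_neg hBτ.le, ← Real.inv_rpow hBτ.le,
        Real.rpow_neg hAτ.le, ← Real.inv_rpow hAτ.le,
        ← Real.mul_rpow (div_nonneg (hc₁.trans hc).le hc₁.le) (inv_nonneg.2 hBτ.le)]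
      congr 1
      have hc₂ : (0:ℝ) < c₂ := hc₁.trans hc
      field_simp
    calc K * (π / r) ^ t
        = ((4 * π * a) ^ (-t) * (4 * π * b) ^ (-t) * (π / r) ^ t) * E := by
          rw [hK_def]; ring
      _ ≤ (4 * π * (c₁ * τ)) ^ (-t) * E := by
          rw [h1]; exact mul_le_mul_of_nonneg_right h2 hE.le
      _ = (c₂/c₁) ^ t * ((4 * π * (c₂ * τ)) ^ (-t) * E) := by rw [h3]; ring
  have goal_eq : (-(n:ℝ)/2) = -t := by rw [ht]; ring
  rw [goal_eq]
  refine le_trans (s1a.trans s1b) ?_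
  rw [step2]
  exact const_id
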